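/- Let K ⊆ [1,r] be compact and s > 1. Then there exists a finite set K_s ⊆ [1,r] such that: for every atomless measure space (X,𝔅,μ) and every measurable p : X → [1,r] with essential range equal to K, there exists a measurable q : X → [1,r] with essential range equal to K_s and 1 ≤ q(x)/p(x) ≤ s for almost all x ∈ X. -/

import Mathlib

open MeasureTheory


lemma preimage_null {X : Type} [MeasurableSpace X] (μ : Measure X) (p : X → ℝ)
    (S : Set ℝ) (h : ∀ y ∈ S, ∃ U ∈ nhds y, μ (p ⁻¹' U) = 0) :
    μ (p ⁻¹' S) = 0 := by
  have h' : ∀ y : S, ∃ V : Set ℝ, IsOpen V ∧ (y : ℝ) ∈ V ∧ μ (p ⁻¹' V) = 0 := by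
    rintro ⟨y, hy⟩
    obtain ⟨U, hU, hU0⟩ := h y hy
    obtain ⟨V, hVU, hVopen, hyV⟩ := mem_nhds_iff.1 hU
    exact ⟨V, hVopen, hyV, measure_mono_null (Set.preimage_mono hVU) hU0⟩
  choose V hVopen hyV hV0 using h'
  obtain ⟨T, hTc, hTU⟩ := TopologicalSpace.isOpen_iUnion_countable V hVopen
  have hS : p ⁻¹' S ⊆ ⋃ y ∈ T, p ⁻¹' (V y) := by
    intro x hx
    have : p x ∈ ⋃ y, V y := Set.mem_iUnion.2 ⟨⟨p x, hx⟩, hyV _⟩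
    rw [← hTU] at this
    simpa using this
  refine measure_mono_null hS ?_
  exact (measure_biUnion_null_iff hTc).2 fun y _ => hV0 y


lemma countable_left_isolated (K : Set ℝ) :
    {y : ℝ | y ∈ K ∧ ∃ ε > 0, K ∩ Set.Ioo (y - ε) y = ∅}.Countable := by
  set L := {y : ℝ | y ∈ K ∧ ∃ ε > 0, K ∩ Set.Ioo (y - ε) y = ∅} with hL
  have h : ∀ y : L, ∃ q : ℚ, ∃ ε > 0, K ∩ Set.Ioo ((y:ℝ) - ε) y = ∅ ∧
      (y:ℝ) - ε < q ∧ (q:ℝ) < y := by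
    rintro ⟨y, hyK, ε, hε, hEmpty⟩
    obtain ⟨q, hq1, hq2⟩ := exists_rat_btwn (show y - ε < y by linarith)
    exact ⟨q, ε, hε, hEmpty, hq1, hq2⟩
  choose f ε hε hEmpty hq1 hq2 using h
  have hinj : Function.Injective f := by
    rintro y₁ y₂ hf
    by_contra hne
    rcases lt_or_gt_of_ne (fun h => hne (Subtype.ext h)) with hlt | hlt
    · have : (y₁ : ℝ) ∈ K ∩ Set.Ioo ((y₂:ℝ) - ε y₂) y₂ := by
        refine ⟨y₁.2.1, ?_, hlt⟩
        calc (y₂:ℝ) - ε y₂ < f y₂ := hq1 y₂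
        _ = f y₁ := by rw [hf]
        _ < y₁ := hq2 y₁
      rw [hEmpty y₂] at this; exact this
    · have : (y₂ : ℝ) ∈ K ∩ Set.Ioo ((y₁:ℝ) - ε y₁) y₁ := by
        refine ⟨y₂.2.1, ?_, hlt⟩
        calc (y₁:ℝ) - ε y₁ < f y₁ := hq1 y₁
        _ = f y₂ := by rw [hf]
        _ < y₂ := hq2 y₂
      rw [hEmpty y₁] at this; exact this
  have : Countable L := Function.Injective.countable hinj
  exact Set.countable_coe_iff.1 this

def Good (s : ℝ) (K Ks : Set ℝ) : Prop :=
  ∀ (X : Type) (_ : MeasurableSpace X) (μ : Measure X),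
    (∀ A : Set X, MeasurableSet A → 0 < μ A →
      ∃ B : Set X, B ⊆ A ∧ MeasurableSet B ∧ 0 < μ B ∧ μ B < μ A) →
    ∀ p : X → ℝ, Measurable p →
      {y : ℝ | ∀ U ∈ nhds y, 0 < μ (p ⁻¹' U)} = K →
      ∃ q : X → ℝ, Measurable q ∧
        {y : ℝ | ∀ U ∈ nhds y, 0 < μ (q ⁻¹' U)} = Ks ∧
        (∀ᵐ x ∂μ, 1 ≤ q x / p x ∧ q x / p x ≤ s)


lemma ae_mem_essRange {X : Type} [MeasurableSpace X] (μ : Measure X) (p : X → ℝ) (K : Set ℝ)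
    (hE : {y : ℝ | ∀ U ∈ nhds y, 0 < μ (p ⁻¹' U)} = K) : ∀ᵐ x ∂μ, p x ∈ K := by
  have h0 : μ (p ⁻¹' Kᶜ) = 0 := by
    refine preimage_null μ p _ fun y hy => ?_
    have : y ∉ {y : ℝ | ∀ U ∈ nhds y, 0 < μ (p ⁻¹' U)} := by rw [hE]; exact hy
    simp only [Set.mem_setOf_eq, not_forall] at this
    obtain ⟨U, hU, hU0⟩ := this
    exact ⟨U, hU, by simpa using hU0⟩
  rw [ae_iff]
  convert h0 using 2
  rfl

lemma measure_univ_pos_of_mem {X : Type} [MeasurableSpace X] (μ : Measure X) (p : X → ℝ)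
    {K : Set ℝ} {y : ℝ} (hy : y ∈ K)
    (hE : {y : ℝ | ∀ U ∈ nhds y, 0 < μ (p ⁻¹' U)} = K) : 0 < μ Set.univ := by
  have : y ∈ {y : ℝ | ∀ U ∈ nhds y, 0 < μ (p ⁻¹' U)} := hE ▸ hy
  simpa using this Set.univ Filter.univ_mem

lemma good_base (s r : ℝ) (hs : 1 < s) (hr : 1 ≤ r) (hrs : r ≤ s) (K : Set ℝ)
    (hsub : K ⊆ Set.Icc 1 r) :
    ∃ Ks : Set ℝ, Ks.Finite ∧ Ks ⊆ Set.Icc 1 r ∧ Good s K Ks := by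
  rcases Set.eq_empty_or_nonempty K with hKe | ⟨y₀, hy₀⟩
  · refine ⟨∅, Set.finite_empty, Set.empty_subset _, ?_⟩
    intro X m μ _ p hp hE
    have hμ : μ = 0 := by
      have : μ (p ⁻¹' Set.univ) = 0 := by
        refine preimage_null μ p _ fun y _ => ?_
        have : y ∉ {y : ℝ | ∀ U ∈ nhds y, 0 < μ (p ⁻¹' U)} := by
          rw [hE, hKe]; exact Set.notMem_empty y
        simp only [Set.mem_setOf_eq, not_forall] at this
        obtain ⟨U, hU, hU0⟩ := this
        exact ⟨U, hU, by simpa using hU0⟩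
      exact Measure.measure_univ_eq_zero.1 (by simpa using this)
    subst hμ
    refine ⟨fun _ => r, measurable_const, ?_, by simp⟩
    ext y; simp; exact ⟨Set.univ, Filter.univ_mem⟩
  · refine ⟨{r}, Set.finite_singleton r, by simp [hr], ?_⟩
    intro X m μ _ p hp hE
    have hpos : 0 < μ Set.univ := measure_univ_pos_of_mem μ p hy₀ hE
    refine ⟨fun _ => r, measurable_const, ?_, ?_⟩
    · ext y
      simp only [Set.mem_setOf_eq, Set.mem_singleton_iff]
      constructor
      · intro h
        by_contra hne
        have hU : {r}ᶜ ∈ nhds y := compl_singleton_mem_nhds hne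
        have := h _ hU
        have hpre : (fun _ : X => r) ⁻¹' {r}ᶜ = ∅ := by
          ext x; simp
        rw [hpre] at this; simp at this
      · intro hyr U hU
        have hrU : r ∈ U := hyr ▸ mem_of_mem_nhds hU
        have hpre : (fun _ : X => r) ⁻¹' U = Set.univ := by
          ext x; simpa using hrU
        rwa [hpre]
    · filter_upwards [ae_mem_essRange μ p K hE] with x hx
      obtain ⟨h1, h2⟩ := hsub hx
      have hp0 : 0 < p x := lt_of_lt_of_le zero_lt_one h1
      constructor
      · rw [le_div_iff₀ hp0]; linarith
      · rw [div_le_iff₀ hp0]; nlinarith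


lemma good_ind (s : ℝ) (hs : 1 < s) : ∀ n : ℕ, ∀ r : ℝ, 1 ≤ r → r < s ^ n →
    ∀ K : Set ℝ, IsCompact K → K ⊆ Set.Icc 1 r →
    ∃ Ks : Set ℝ, Ks.Finite ∧ Ks ⊆ Set.Icc 1 r ∧ Good s K Ks := by
  intro n
  induction n with
  | zero => intro r hr hrn K _ _; exfalso; rw [pow_zero] at hrn; linarith
  | succ n IH =>
    intro r hr hrn K hK hsub
    by_cases hrs : r ≤ s
    · exact good_base s r hs hr hrs K hsub
    push_neg at hrs
    have hs0 : (0 : ℝ) < s := by linarith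
    have hr0 : (0 : ℝ) < r := by linarith
    -- pick the cut point b
    have hlo : r / s < min r (s ^ n) := by
      refine lt_min ?_ ?_
      · rw [div_lt_iff₀ hs0]; nlinarith
      · rw [div_lt_iff₀ hs0]; rw [pow_succ] at hrn; linarith
    obtain ⟨b, hbIoo, hbL⟩ :
        ∃ b ∈ Set.Ioo (r / s) (min r (s ^ n)),
          b ∉ {y : ℝ | y ∈ K ∧ ∃ ε > 0, K ∩ Set.Ioo (y - ε) y = ∅} := by
      by_contra hcon
      push_neg at hcon
      have hsubL : Set.Ioo (r / s) (min r (s ^ n)) ⊆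
          {y : ℝ | y ∈ K ∧ ∃ ε > 0, K ∩ Set.Ioo (y - ε) y = ∅} := hcon
      have h0 : volume (Set.Ioo (r / s) (min r (s ^ n))) = 0 :=
        ((countable_left_isolated K).mono hsubL).measure_zero _
      rw [Real.volume_Ioo] at h0
      simp only [ENNReal.ofReal_eq_zero] at h0
      linarith
    obtain ⟨hbgt, hblt⟩ := hbIoo
    have hbr : b < r := lt_of_lt_of_le hblt (min_le_left _ _)
    have hbn : b < s ^ n := lt_of_lt_of_le hblt (min_le_right _ _)
    have hb1 : 1 < b := by
      have : 1 < r / s := (one_lt_div hs0).2 hrs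
      linarith
    have hrsb : r < s * b := by
      rw [div_lt_iff₀ hs0] at hbgt; linarith
    set K' := K ∩ Set.Iic b with hK'def
    have hK'cpt : IsCompact K' := hK.inter_right isClosed_Iic
    have hsub' : K' ⊆ Set.Icc 1 b := fun y hy => ⟨(hsub hy.1).1, hy.2⟩
    obtain ⟨Ks', hKs'f, hKs'sub, hGood'⟩ := IH b hb1.le hbn K' hK'cpt hsub'
    have hKs'sub_r : Ks' ⊆ Set.Icc 1 r :=
      hKs'sub.trans (Set.Icc_subset_Icc_right hbr.le)
    by_cases hc : (K ∩ Set.Ioi b).Nonempty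
    · -- main case: top interval nonempty, Ks = insert r Ks'
      refine ⟨insert r Ks', hKs'f.insert r, ?_, ?_⟩
      · exact Set.insert_subset ⟨hr, le_refl r⟩ hKs'sub_r
      intro X m μ hsplit p hp hE
      set A := p ⁻¹' Set.Iic b with hAdef
      have hA : MeasurableSet A := hp measurableSet_Iic
      have hAc_eq : Aᶜ = p ⁻¹' Set.Ioi b := by
        rw [hAdef, ← Set.preimage_compl, Set.compl_Iic]
      set μ₁ := μ.restrict A with hμ₁def
      have hμ₁app : ∀ S : Set X, μ₁ S = μ (S ∩ A) := fun S => Measure.restrict_apply' hA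
      -- essential range w.r.t. μ₁ is K'
      have hE1 : {y : ℝ | ∀ U ∈ nhds y, 0 < μ₁ (p ⁻¹' U)} = K' := by
        ext y
        simp only [Set.mem_setOf_eq]
        constructor
        · intro h
          constructor
          · rw [← hE]
            intro U hU
            refine lt_of_lt_of_le (h U hU) ?_
            rw [hμ₁app]
            exact measure_mono Set.inter_subset_left
          · rw [Set.mem_Iic]
            by_contra hby
            push_neg at hby
            have h2 := h (Set.Ioi b) (isOpen_Ioi.mem_nhds hby)
            rw [hμ₁app] at h2
            have : p ⁻¹' Set.Ioi b ∩ A = ∅ := by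
              ext x
              simp only [hAdef, Set.mem_inter_iff, Set.mem_preimage, Set.mem_Ioi,
                Set.mem_Iic, Set.mem_empty_iff_false, iff_false, not_and]
              intro hx; linarith
            rw [this] at h2; simp at h2
        · rintro ⟨hyK, hyb⟩ U hU
          rw [Set.mem_Iic] at hyb
          rcases lt_or_eq_of_le hyb with hylt | hyeq
          · have hU' : U ∩ Set.Iio b ∈ nhds y := Filter.inter_mem hU (Iio_mem_nhds hylt)
            have hpos : 0 < μ (p ⁻¹' (U ∩ Set.Iio b)) := by
              have := hE ▸ hyK
              exact this (U ∩ Set.Iio b) hU'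
            refine lt_of_lt_of_le hpos ?_
            rw [hμ₁app]
            refine measure_mono ?_
            intro x hx
            exact ⟨hx.1, show p x ≤ b from le_of_lt hx.2⟩
          · -- y = b, b ∈ K, not left-isolated
            subst hyeq
            obtain ⟨ε, hε, hball⟩ := Metric.mem_nhds_iff.1 hU
            have hne : (K ∩ Set.Ioo (y - ε) y).Nonempty := by
              rcases Set.eq_empty_or_nonempty (K ∩ Set.Ioo (y - ε) y) with he | hne
              · exact absurd ⟨hyK, ε, hε, he⟩ hbL
              · exact hne
            obtain ⟨y', hy'K, hy'lo, hy'hi⟩ := hne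
            have hV : Set.Ioo (y - ε) y ∈ nhds y' :=
              isOpen_Ioo.mem_nhds ⟨hy'lo, hy'hi⟩
            have hpos : 0 < μ (p ⁻¹' Set.Ioo (y - ε) y) := (hE ▸ hy'K) _ hV
            refine lt_of_lt_of_le hpos ?_
            rw [hμ₁app]
            refine measure_mono fun x hx => ?_
            refine ⟨?_, show p x ≤ y from le_of_lt hx.2⟩
            apply hball
            rw [Real.ball_eq_Ioo]
            exact ⟨hx.1, by linarith [hx.2]⟩
      -- splitting property for μ₁
      have hsplit1 : ∀ A' : Set X, MeasurableSet A' → 0 < μ₁ A' →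
          ∃ B : Set X, B ⊆ A' ∧ MeasurableSet B ∧ 0 < μ₁ B ∧ μ₁ B < μ₁ A' := by
        intro A' hA' hpos
        rw [hμ₁app] at hpos
        obtain ⟨B, hBsub, hBm, hB0, hBlt⟩ := hsplit (A' ∩ A) (hA'.inter hA) hpos
        have hBA : B ∩ A = B := Set.inter_eq_self_of_subset_left
          (hBsub.trans Set.inter_subset_right)
        refine ⟨B, hBsub.trans Set.inter_subset_left, hBm, ?_, ?_⟩
        · rw [hμ₁app, hBA]; exact hB0
        · rw [hμ₁app, hμ₁app, hBA]; exact hBlt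
      obtain ⟨q', hq'm, hEq', hae'⟩ := hGood' X m μ₁ hsplit1 p hp hE1
      set q : X → ℝ := fun x => if p x ≤ b then q' x else r with hqdef
      have hqm : Measurable q := Measurable.ite (hp measurableSet_Iic) hq'm measurable_const
      have hqA : ∀ S : Set ℝ, q ⁻¹' S ∩ A = q' ⁻¹' S ∩ A := by
        intro S
        ext x
        simp only [Set.mem_inter_iff, Set.mem_preimage, hAdef, Set.mem_Iic]
        constructor
        · rintro ⟨h1, h2⟩; rw [hqdef] at h1; simp only [if_pos h2] at h1; exact ⟨h1, h2⟩
        · rintro ⟨h1, h2⟩; exact ⟨by rw [hqdef]; simp only [if_pos h2]; exact h1, h2⟩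
      have hAcpos : 0 < μ Aᶜ := by
        obtain ⟨y₀, hy₀K, hy₀b⟩ := hc
        rw [hAc_eq]
        exact (hE ▸ hy₀K) _ (isOpen_Ioi.mem_nhds hy₀b)
      have hqAc_mem : ∀ S : Set ℝ, r ∈ S → Aᶜ ⊆ q ⁻¹' S := by
        intro S hrS x hx
        rw [hAdef, Set.mem_compl_iff, Set.mem_preimage, Set.mem_Iic, not_le] at hx
        simp only [Set.mem_preimage, hqdef, if_neg (not_le.2 hx)]
        exact hrS
      have hqAc_not : ∀ S : Set ℝ, r ∉ S → q ⁻¹' S ∩ Aᶜ = ∅ := by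
        intro S hrS
        ext x
        simp only [Set.mem_inter_iff, Set.mem_preimage, Set.mem_empty_iff_false, iff_false,
          not_and, hAdef, Set.mem_compl_iff, Set.mem_Iic, not_le]
        intro hqx hx
        rw [hqdef] at hqx
        simp only [if_neg (not_le.2 hx)] at hqx
        exact hrS hqx
      refine ⟨q, hqm, ?_, ?_⟩
      · -- essential range of q is insert r Ks'
        ext y
        simp only [Set.mem_setOf_eq, Set.mem_insert_iff]
        constructor
        · intro h
          by_contra hy
          push_neg at hy
          obtain ⟨hyr, hyKs'⟩ := hy
          have : y ∉ {y : ℝ | ∀ U ∈ nhds y, 0 < μ₁ (q' ⁻¹' U)} := by rw [hEq']; exact hyKs'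
          simp only [Set.mem_setOf_eq, not_forall] at this
          obtain ⟨U₁, hU₁, hU₁0⟩ := this
          have hU₁0' : μ₁ (q' ⁻¹' U₁) = 0 := by simpa using hU₁0
          set U := U₁ ∩ {r}ᶜ with hUdef
          have hU : U ∈ nhds y := Filter.inter_mem hU₁ (compl_singleton_mem_nhds hyr)
          have hzero : μ (q ⁻¹' U) = 0 := by
            have hsplitU : μ (q ⁻¹' U) ≤ μ (q ⁻¹' U ∩ A) + μ (q ⁻¹' U ∩ Aᶜ) := by
              have := measure_le_inter_add_diff μ (q ⁻¹' U) A
              rwa [Set.diff_eq] at this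
            have h1 : μ (q ⁻¹' U ∩ A) = 0 := by
              rw [hqA]
              have h0 : μ (q' ⁻¹' U₁ ∩ A) = 0 := by rw [← hμ₁app]; exact hU₁0'
              refine measure_mono_null ?_ h0
              exact Set.inter_subset_inter_left _
                (Set.preimage_mono Set.inter_subset_left)
            have h2 : μ (q ⁻¹' U ∩ Aᶜ) = 0 := by
              rw [hqAc_not U (by simp [hUdef])]; simp
            rw [h1, h2] at hsplitU
            simpa using hsplitU
          exact absurd (h U hU) (by rw [hzero]; simp)
        · intro hy U hU
          rcases hy with rfl | hyKs'
          · exact lt_of_lt_of_le hAcpos (measure_mono (hqAc_mem U (mem_of_mem_nhds hU)))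
          · have := (hEq' ▸ hyKs') U hU
            refine lt_of_lt_of_le this ?_
            rw [hμ₁app, ← hqA]
            exact measure_mono Set.inter_subset_left
      · -- a.e. bounds
        have hdecomp := Measure.restrict_add_restrict_compl (μ := μ) hA
        rw [← hdecomp]
        rw [ae_add_measure_iff]
        constructor
        · filter_upwards [hae', ae_restrict_mem hA] with x hx hxA
          rw [hAdef, Set.mem_preimage, Set.mem_Iic] at hxA
          rw [hqdef]; simp only [if_pos hxA]; exact hx
        · have hKae : ∀ᵐ x ∂μ.restrict Aᶜ, p x ∈ K :=
            (ae_mem_essRange μ p K hE).filter_mono (ae_mono Measure.restrict_le_self)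
          filter_upwards [hKae, ae_restrict_mem hA.compl] with x hxK hxAc
          rw [hAdef, Set.mem_compl_iff, Set.mem_preimage, Set.mem_Iic, not_le] at hxAc
          have hp1 : 1 ≤ p x := (hsub hxK).1
          have hpr : p x ≤ r := (hsub hxK).2
          have hp0 : 0 < p x := by linarith
          rw [hqdef]; simp only [if_neg (not_le.2 hxAc)]
          constructor
          · rw [le_div_iff₀ hp0]; linarith
          · rw [div_le_iff₀ hp0]; nlinarith
    · -- degenerate case: K ⊆ Iic b, so K' = K
      have hKK' : K' = K := by
        rw [hK'def, Set.inter_eq_self_of_subset_left]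
        intro y hyK
        rw [Set.mem_Iic]
        by_contra hyb
        push_neg at hyb
        exact hc ⟨y, hyK, hyb⟩
      exact ⟨Ks', hKs'f, hKs'sub_r, hKK' ▸ hGood'⟩


theorem stmt15 (r : ℝ) (hr : 1 ≤ r) (K : Set ℝ) (hK : IsCompact K)
    (hKsub : K ⊆ Set.Icc 1 r) (s : ℝ) (hs : 1 < s) :
    ∃ Ks : Set ℝ, Ks.Finite ∧ Ks ⊆ Set.Icc 1 r ∧
      ∀ (X : Type) (_ : MeasurableSpace X) (μ : Measure X),
        (∀ A : Set X, MeasurableSet A → 0 < μ A →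
          ∃ B : Set X, B ⊆ A ∧ MeasurableSet B ∧ 0 < μ B ∧ μ B < μ A) →
        ∀ p : X → ℝ, Measurable p →
          {y : ℝ | ∀ U ∈ nhds y, 0 < μ (p ⁻¹' U)} = K →
          ∃ q : X → ℝ, Measurable q ∧
            {y : ℝ | ∀ U ∈ nhds y, 0 < μ (q ⁻¹' U)} = Ks ∧
            (∀ᵐ x ∂μ, 1 ≤ q x / p x ∧ q x / p x ≤ s) := by
  obtain ⟨n, hn⟩ := pow_unbounded_of_one_lt r hs
  obtain ⟨Ks, h1, h2, h3⟩ := good_ind s hs n r hr hn K hK hKsub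
  exact ⟨Ks, h1, h2, h3⟩
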